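/- For fixed α ∈ [π/2, π), the function (β, γ) ↦ L(α) + L(β) + L(γ) subject to β, γ ≥ 0 and β + γ = π − α attains its maximum at β = γ = (π − α)/2; moreover the function α ↦ L(α) + 2L((π−α)/2) is maximized on [π/2, π) at α = π/2. -/

import Mathlib

open Real
open MeasureTheory intervalIntegral
noncomputable section

/-- The Lobachevsky function `L(θ) = -∫₀^θ log |2 sin u| du`. -/
def lobachevsky (θ : ℝ) : ℝ := -∫ u in (0:ℝ)..θ, log |2 * sin u|

/-- integrability of log|2 sin u| on [0, π/2] -/
lemma lob_integrable_base : IntervalIntegrable (fun u => log |2 * sin u|) volume 0 (π/2) := by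
  rw [intervalIntegrable_iff_integrableOn_Ioc_of_le (by positivity)]
  have hmeas : AEStronglyMeasurable (fun u => log |2 * sin u|)
      (volume.restrict (Set.Ioc 0 (π/2))) :=
    (Real.measurable_log.comp ((measurable_const.mul Real.measurable_sin).abs)).aestronglyMeasurable
  have hbint : IntegrableOn (fun u : ℝ => 2 * Real.log 2 + 2 * u ^ (-(1/2) : ℝ))
      (Set.Ioc 0 (π/2)) volume := by
    apply Integrable.add
    · exact integrableOn_const (by simp) enorm_ne_top
    · have := (intervalIntegrable_rpow' (r := (-(1/2) : ℝ)) (by norm_num)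
          (a := 0) (b := π/2)).const_mul 2
      rw [intervalIntegrable_iff_integrableOn_Ioc_of_le (by positivity)] at this
      exact this
  apply Integrable.mono' hbint hmeas
  rw [ae_restrict_iff' measurableSet_Ioc]
  refine ae_of_all _ fun u hu => ?_
  obtain ⟨hu0, hu2⟩ := hu
  have hsinpos : 0 < Real.sin u := Real.sin_pos_of_pos_of_lt_pi hu0
    (lt_of_le_of_lt hu2 (by linarith [Real.pi_pos]))
  have habs : |2 * Real.sin u| = 2 * Real.sin u := abs_of_pos (by linarith)
  rw [habs]
  have hlog2 : Real.log (2 * Real.sin u) = Real.log 2 + Real.log (Real.sin u) :=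
    Real.log_mul (by norm_num) (ne_of_gt hsinpos)
  have hkey : -Real.log u ≤ 2 * u ^ (-(1/2) : ℝ) := by
    have h1 : Real.log (u ^ (-(1/2) : ℝ)) ≤ u ^ (-(1/2) : ℝ) - 1 :=
      Real.log_le_sub_one_of_pos (Real.rpow_pos_of_pos hu0 _)
    rw [Real.log_rpow hu0] at h1
    nlinarith [Real.rpow_pos_of_pos hu0 (-(1/2) : ℝ)]
  have hj : u / 2 ≤ Real.sin u := by
    have hpi4 : π ≤ 4 := by linarith [Real.pi_le_four]
    have : u / 2 ≤ 2 / π * u := by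
      rw [div_le_iff₀ (by norm_num), div_mul_eq_mul_div, div_mul_eq_mul_div,
        le_div_iff₀ Real.pi_pos]
      nlinarith
    linarith [Real.mul_le_sin (le_of_lt hu0) hu2]
  have hsin1 : Real.sin u ≤ 1 := Real.sin_le_one u
  have hls : -Real.log (Real.sin u) ≤ Real.log 2 + 2 * u ^ (-(1/2) : ℝ) := by
    have h2 : Real.log (u/2) ≤ Real.log (Real.sin u) :=
      Real.log_le_log (by linarith) hj
    have h3 : Real.log (u/2) = Real.log u - Real.log 2 := by
      rw [Real.log_div (ne_of_gt hu0) (by norm_num)]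
    linarith
  have hlsneg : Real.log (Real.sin u) ≤ 0 := Real.log_nonpos (le_of_lt hsinpos) hsin1
  rw [Real.norm_eq_abs, hlog2, abs_le]
  constructor
  · nlinarith [Real.rpow_pos_of_pos hu0 (-(1/2) : ℝ), Real.log_pos (by norm_num : (1:ℝ) < 2)]
  · nlinarith [Real.rpow_pos_of_pos hu0 (-(1/2) : ℝ), Real.log_pos (by norm_num : (1:ℝ) < 2)]

lemma lob_ii {a b : ℝ} (ha : a ∈ Set.Icc 0 (π/2)) (hb : b ∈ Set.Icc 0 (π/2)) :
    IntervalIntegrable (fun u => log |2 * sin u|) volume a b := by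
  apply lob_integrable_base.mono_set
  intro x hx
  rw [Set.uIcc_of_le (show (0:ℝ) ≤ π/2 by positivity)]
  exact Set.uIcc_subset_Icc ha hb hx

/-- Concavity-type inequality: midpoint value dominates. -/
lemma lob_key1 {β γ : ℝ} (hβ : 0 ≤ β) (hle : β ≤ γ) (hγ : γ ≤ π/2) :
    lobachevsky β + lobachevsky γ ≤ 2 * lobachevsky ((β + γ) / 2) := by
  set g : ℝ → ℝ := fun u => log |2 * sin u| with hg
  set m : ℝ := (β + γ) / 2 with hm
  set d : ℝ := m - β with hd
  clear_value d
  clear_value m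
  have hβm : β ≤ m := by simp only [hm]; linarith
  have hmγ : m ≤ γ := by simp only [hm]; linarith
  have hmem : ∀ x, 0 ≤ x → x ≤ π/2 → x ∈ Set.Icc 0 (π/2) := fun x h1 h2 => ⟨h1, h2⟩
  have hβI : β ∈ Set.Icc 0 (π/2) := ⟨hβ, le_trans hle hγ⟩
  have hmI : m ∈ Set.Icc 0 (π/2) := ⟨by linarith, by linarith⟩
  have hγI : γ ∈ Set.Icc 0 (π/2) := ⟨by linarith, hγ⟩
  have h0I : (0:ℝ) ∈ Set.Icc 0 (π/2) := ⟨le_refl _, by positivity⟩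
  -- translation identity
  have I1 : (∫ u in β..m, g (u + d)) = ∫ u in m..γ, g u := by
    rw [intervalIntegral.integral_comp_add_right]
    rw [show β + d = m by simp only [hd]; ring, show m + d = γ by simp only [hd, hm]; ring]
  -- integrability of the shifted function
  have hshift : IntervalIntegrable (fun u => g (u + d)) volume β m := by
    have := (lob_ii hmI hγI).comp_add_right d
    rwa [show m - d = β by simp only [hd]; ring, show γ - d = m by simp only [hd, hm]; ring]
      at this
  -- pointwise comparison a.e.
  have I2 : (∫ u in β..m, g u) ≤ ∫ u in β..m, g (u + d) := by
    apply intervalIntegral.integral_mono_ae_restrict hβm (lob_ii hβI hmI) hshift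
    have hne : ∀ᵐ u : ℝ ∂volume, u ≠ 0 :=
      ae_iff.2 (by simpa using measure_singleton (0:ℝ))
    filter_upwards [ae_restrict_of_ae hne, ae_restrict_mem measurableSet_Icc] with u hu0 humem
    obtain ⟨hu1, hu2⟩ := humem
    have hupos : 0 < u := lt_of_le_of_ne (le_trans hβ hu1) (Ne.symm hu0)
    have hd0 : 0 ≤ d := by simp only [hd]; linarith
    have hsin1 : 0 < Real.sin u := Real.sin_pos_of_pos_of_lt_pi hupos
      (by linarith [Real.pi_gt_three])
    have hsinle : Real.sin u ≤ Real.sin (u + d) := by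
      apply Real.strictMonoOn_sin.monotoneOn ⟨by linarith, by linarith⟩
        ⟨by linarith, by linarith⟩ (by linarith)
    simp only [hg]
    have h1 : |2 * Real.sin u| = 2 * Real.sin u := abs_of_pos (by linarith)
    have h2 : |2 * Real.sin (u + d)| = 2 * Real.sin (u + d) := abs_of_pos (by linarith)
    rw [h1, h2]
    exact Real.log_le_log (by linarith) (by linarith)
  have e1 : (∫ u in (0:ℝ)..m, g u) - ∫ u in (0:ℝ)..β, g u = ∫ u in β..m, g u :=
    intervalIntegral.integral_interval_sub_left (lob_ii h0I hmI) (lob_ii h0I hβI)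
  have e2 : (∫ u in (0:ℝ)..γ, g u) - ∫ u in (0:ℝ)..m, g u = ∫ u in m..γ, g u :=
    intervalIntegral.integral_interval_sub_left (lob_ii h0I hγI) (lob_ii h0I hmI)
  show -(∫ u in (0:ℝ)..β, g u) + -(∫ u in (0:ℝ)..γ, g u) ≤ 2 * -(∫ u in (0:ℝ)..m, g u)
  linarith [I1 ▸ I2]

/-- For fixed `α ∈ [π/2, π)`, the function
`(β, γ) ↦ L(α) + L(β) + L(γ)` subject to `β, γ ≥ 0`, `β + γ = π - α` attains its maximum
at `β = γ = (π - α)/2`; moreover `α ↦ L(α) + 2·L((π - α)/2)` is maximized on `[π/2, π)`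
at `α = π/2`. -/
theorem lobachevsky_maximization (α : ℝ) (hα₁ : π / 2 ≤ α) (hα₂ : α < π) :
    (∀ β γ : ℝ, 0 ≤ β → 0 ≤ γ → β + γ = π - α →
        lobachevsky α + lobachevsky β + lobachevsky γ ≤
          lobachevsky α + 2 * lobachevsky ((π - α) / 2)) ∧
      lobachevsky α + 2 * lobachevsky ((π - α) / 2) ≤
        lobachevsky (π / 2) + 2 * lobachevsky (π / 4) := by
  constructor
  · intro β γ hβ hγ hsum
    have hmid : (π - α) / 2 = (β + γ) / 2 := by rw [← hsum]
    rw [hmid]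
    rcases le_total β γ with h | h
    · have := lob_key1 hβ h (by linarith)
      linarith
    · have := lob_key1 hγ h (by linarith)
      rw [show (γ + β) / 2 = (β + γ) / 2 by ring] at this
      linarith
  · set g : ℝ → ℝ := fun u => log |2 * sin u| with hg
    have hπ : 0 < π := Real.pi_pos
    -- integrability on [π/2, α] : continuity
    have hcont : ContinuousOn g (Set.Icc (π/2) α) := by
      apply ContinuousOn.log
      · exact ((continuous_const.mul Real.continuous_sin).abs).continuousOn
      · intro t ht
        have : 0 < Real.sin t := Real.sin_pos_of_pos_of_lt_pi (by linarith [ht.1])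
          (lt_of_le_of_lt ht.2 hα₂)
        simp only [abs_ne_zero]
        positivity
    have hIg : IntervalIntegrable g volume (π/2) α := by
      apply ContinuousOn.intervalIntegrable
      rwa [Set.uIcc_of_le hα₁]
    have hcont2 : ContinuousOn (fun t => g (-(1/2) * t + π/2)) (Set.Icc (π/2) α) := by
      apply ContinuousOn.log
      · exact ((continuous_const.mul
          (Real.continuous_sin.comp ((continuous_const.mul continuous_id).add
            continuous_const))).abs).continuousOn
      · intro t ht
        have h1 : 0 < -(1/2) * t + π/2 := by linarith [ht.2, hα₂]
        have h2 : -(1/2) * t + π/2 < π := by linarith [ht.1]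
        have : 0 < Real.sin (-(1/2) * t + π/2) := Real.sin_pos_of_pos_of_lt_pi h1 h2
        simp only [abs_ne_zero]
        positivity
    have hIg2 : IntervalIntegrable (fun t => g (-(1/2) * t + π/2)) volume (π/2) α := by
      apply ContinuousOn.intervalIntegrable
      rwa [Set.uIcc_of_le hα₁]
    -- substitution
    have Isub : (∫ t in (π/2)..α, g (-(1/2) * t + π/2)) =
        -2 * ∫ u in (π/4)..((π - α)/2), g u := by
      rw [intervalIntegral.integral_comp_mul_add g (by norm_num : (-(1/2) : ℝ) ≠ 0) (π/2)]
      rw [show -(1/2) * (π/2) + π/2 = π/4 by ring, show -(1/2) * α + π/2 = (π - α)/2 by ring]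
      simp [smul_eq_mul]
    -- pointwise comparison
    have Imono : (∫ t in (π/2)..α, g (-(1/2) * t + π/2)) ≤ ∫ t in (π/2)..α, g t := by
      apply intervalIntegral.integral_mono_on hα₁ hIg2 hIg
      intro t ht
      obtain ⟨ht1, ht2⟩ := ht
      set θ : ℝ := -(1/2) * t + π/2 with hθ
      clear_value θ
      have hθpos : 0 < θ := by simp only [hθ]; linarith [lt_of_le_of_lt ht2 hα₂]
      have hθle : θ ≤ π/4 := by simp only [hθ]; linarith
      have hsθ : 0 < Real.sin θ := Real.sin_pos_of_pos_of_lt_pi hθpos (by linarith)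
      have hcθ : Real.sqrt 2 / 2 ≤ Real.cos θ := by
        rw [← Real.cos_pi_div_four]
        apply Real.strictAntiOn_cos.antitoneOn ⟨by linarith, by linarith⟩
          ⟨by positivity, by linarith⟩ hθle
      have hc2 : (1:ℝ)/2 ≤ Real.cos θ := by
        have : (1:ℝ) ≤ Real.sqrt 2 := by
          rw [show (1:ℝ) = Real.sqrt 1 by simp]
          exact Real.sqrt_le_sqrt (by norm_num)
        linarith
      have hsint : Real.sin t = 2 * Real.sin θ * Real.cos θ := by
        rw [show t = π - 2 * θ by simp only [hθ]; ring, Real.sin_pi_sub, Real.sin_two_mul]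
      have hstpos : 0 < Real.sin t := by rw [hsint]; positivity
      have hle : Real.sin θ ≤ Real.sin t := by nlinarith
      simp only [hg]
      rw [abs_of_pos (by linarith : (0:ℝ) < 2 * Real.sin θ),
        abs_of_pos (by linarith : (0:ℝ) < 2 * Real.sin t)]
      exact Real.log_le_log (by linarith) (by linarith)
    -- identities for L
    have h0I : (0:ℝ) ∈ Set.Icc 0 (π/2) := ⟨le_refl _, by positivity⟩
    have hA : (∫ u in (0:ℝ)..α, g u) =
        (∫ u in (0:ℝ)..(π/2), g u) + ∫ t in (π/2)..α, g t :=
      (intervalIntegral.integral_add_adjacent_intervals lob_integrable_base hIg).symm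
    have hB : (∫ u in (0:ℝ)..((π - α)/2), g u) - ∫ u in (0:ℝ)..(π/4), g u =
        ∫ u in (π/4)..((π - α)/2), g u :=
      intervalIntegral.integral_interval_sub_left
        (lob_ii h0I ⟨by linarith, by linarith⟩) (lob_ii h0I ⟨by positivity, by linarith⟩)
    show -(∫ u in (0:ℝ)..α, g u) + 2 * -(∫ u in (0:ℝ)..((π - α)/2), g u) ≤
      -(∫ u in (0:ℝ)..(π/2), g u) + 2 * -(∫ u in (0:ℝ)..(π/4), g u)
    linarith [Isub ▸ Imono]

end
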